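/- Let 𝖶 be a real random variable with density f_𝖶(w) = (√2 / (3^{1/4} Γ(1/4))) · exp(−w⁴/12), and let Z be a standard normal random variable independent of 𝖶. Then there exists C > 0 such that for all integers n ≥ 2, the total variation distance satisfies d_TV( 𝖶 + n^{−1/4}·Z , 𝖶 ) ≤ C·√( (log n)/n ). -/

import Mathlib

open MeasureTheory Real ProbabilityTheory
open scoped NNReal ENNReal

/-- Density `f_𝖶(w) = (√2 / (3^{1/4} Γ(1/4))) exp(−w⁴/12)` of the critical limit law. -/
noncomputable def quarticDensity (w : ℝ) : ℝ :=
  (Real.sqrt 2 / ((3 : ℝ) ^ ((1 : ℝ) / 4) * Real.Gamma (1 / 4))) * Real.exp (-w ^ 4 / 12)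

/-- Law of the critical limit random variable `𝖶`. -/
noncomputable def quarticMeasure : Measure ℝ :=
  volume.withDensity fun w => ENNReal.ofReal (quarticDensity w)

noncomputable def qD' (w : ℝ) : ℝ := quarticDensity w * (-(w ^ 3) / 3)
noncomputable def qD'' (w : ℝ) : ℝ := quarticDensity w * (w ^ 6 / 9 - w ^ 2)

lemma qc_pos : 0 < Real.sqrt 2 / ((3 : ℝ) ^ ((1 : ℝ) / 4) * Real.Gamma (1 / 4)) := by
  apply div_pos (Real.sqrt_pos.2 (by norm_num))
  exact mul_pos (Real.rpow_pos_of_pos (by norm_num) _) (Real.Gamma_pos_of_pos (by norm_num))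

lemma qD_nonneg (w : ℝ) : 0 ≤ quarticDensity w :=
  le_of_lt (mul_pos qc_pos (Real.exp_pos _))

lemma hasDerivAt_qD (w : ℝ) : HasDerivAt quarticDensity (qD' w) w := by
  have h1 : HasDerivAt (fun w : ℝ => -w ^ 4 / 12) (-(w ^ 3) / 3) w := by
    have := ((hasDerivAt_pow 4 w).neg).div_const 12
    exact this.congr_deriv (by norm_num <;> ring)
  have := (h1.exp).const_mul (Real.sqrt 2 / ((3 : ℝ) ^ ((1 : ℝ) / 4) * Real.Gamma (1 / 4)))
  refine this.congr_deriv ?_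
  simp only [qD', quarticDensity]
  ring

lemma hasDerivAt_qD' (w : ℝ) : HasDerivAt qD' (qD'' w) w := by
  have h1 : HasDerivAt (fun w : ℝ => -(w ^ 3) / 3) (-(w ^ 2)) w := by
    have := ((hasDerivAt_pow 3 w).neg).div_const 3
    exact this.congr_deriv (by norm_num <;> ring)
  have h2 := (hasDerivAt_qD w).mul h1
  refine h2.congr_deriv ?_
  rw [qD', qD'']
  ring

lemma continuous_qD : Continuous quarticDensity := by
  unfold quarticDensity; fun_prop

lemma continuous_qD'' : Continuous qD'' := by
  unfold qD'' quarticDensity; fun_prop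

lemma integrable_gauss_pow (k : ℕ) {b : ℝ} (hb : 0 < b) :
    Integrable (fun x : ℝ => |x| ^ k * Real.exp (-b * x ^ 2)) := by
  have key : ∀ x : ℝ, |x| ^ k * Real.exp (-b * x ^ 2) ≤
      Real.exp ((k : ℝ) ^ 2 / (2 * b)) * Real.exp (-(b / 2) * x ^ 2) := by
    intro x
    have h1 : |x| ^ k ≤ Real.exp ((k : ℝ) * |x|) := by
      calc |x| ^ k ≤ Real.exp |x| ^ k :=
        pow_le_pow_left₀ (abs_nonneg x) (by linarith [Real.add_one_le_exp |x|]) k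
      _ = Real.exp ((k : ℝ) * |x|) := by rw [← Real.exp_nat_mul]
    calc |x| ^ k * Real.exp (-b * x ^ 2) ≤ Real.exp ((k : ℝ) * |x|) * Real.exp (-b * x ^ 2) := by
          exact mul_le_mul_of_nonneg_right h1 (Real.exp_pos _).le
      _ = Real.exp ((k : ℝ) * |x| - b * x ^ 2) := by rw [← Real.exp_add]; ring_nf
      _ ≤ Real.exp ((k : ℝ) ^ 2 / (2 * b)) * Real.exp (-(b / 2) * x ^ 2) := by
          rw [← Real.exp_add]
          apply Real.exp_le_exp.2
          have hkey : (k : ℝ) ^ 2 / (2 * b) + -(b / 2) * x ^ 2 - ((k : ℝ) * |x| - b * x ^ 2)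
              = (b * |x| - (k : ℝ)) ^ 2 / (2 * b) := by
            rw [← sq_abs x]
            field_simp
            ring_nf
          nlinarith [hkey, div_nonneg (sq_nonneg (b * |x| - (k : ℝ))) (by linarith : (0:ℝ) ≤ 2 * b)]
  have hint : Integrable (fun x : ℝ =>
      Real.exp ((k : ℝ) ^ 2 / (2 * b)) * Real.exp (-(b / 2) * x ^ 2)) :=
    (integrable_exp_neg_mul_sq (by linarith)).const_mul _
  apply hint.mono' (Continuous.aestronglyMeasurable (by fun_prop))
  filter_upwards with x
  rw [Real.norm_eq_abs, abs_of_nonneg (by positivity)]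
  exact key x

lemma integrable_quartic_pow (k : ℕ) :
    Integrable (fun w : ℝ => |w| ^ k * Real.exp (-w ^ 4 / 12)) := by
  have key : ∀ w : ℝ, |w| ^ k * Real.exp (-w ^ 4 / 12) ≤
      Real.exp (1 / 12) * (|w| ^ k * Real.exp (-(1 / 12 : ℝ) * w ^ 2)) := by
    intro w
    have h : Real.exp (-w ^ 4 / 12) ≤ Real.exp (1 / 12) * Real.exp (-(1 / 12 : ℝ) * w ^ 2) := by
      rw [← Real.exp_add]
      apply Real.exp_le_exp.2
      nlinarith [sq_nonneg (w ^ 2 - 1)]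
    calc |w| ^ k * Real.exp (-w ^ 4 / 12)
        ≤ |w| ^ k * (Real.exp (1 / 12) * Real.exp (-(1 / 12 : ℝ) * w ^ 2)) :=
          mul_le_mul_of_nonneg_left h (by positivity)
      _ = Real.exp (1 / 12) * (|w| ^ k * Real.exp (-(1 / 12 : ℝ) * w ^ 2)) := by ring
  have hint := ((integrable_gauss_pow k (b := 1/12) (by norm_num)).const_mul (Real.exp (1/12)))
  apply hint.mono' (Continuous.aestronglyMeasurable (by fun_prop))
  filter_upwards with w
  rw [Real.norm_eq_abs, abs_of_nonneg (by positivity)]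
  exact key w

lemma integrable_qD : Integrable quarticDensity := by
  have := (integrable_quartic_pow 0).const_mul (Real.sqrt 2 / ((3 : ℝ) ^ ((1 : ℝ) / 4) * Real.Gamma (1 / 4)))
  apply this.mono' continuous_qD.aestronglyMeasurable
  filter_upwards with w
  rw [Real.norm_eq_abs, abs_of_nonneg (qD_nonneg w)]
  simp [quarticDensity]

lemma integrable_qD' : Integrable qD' := by
  have := (integrable_quartic_pow 3).const_mul
    (Real.sqrt 2 / ((3 : ℝ) ^ ((1 : ℝ) / 4) * Real.Gamma (1 / 4)) / 3)
  apply this.mono' (Continuous.aestronglyMeasurable (by unfold qD' quarticDensity; fun_prop))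
  filter_upwards with w
  rw [Real.norm_eq_abs, qD', abs_mul, abs_of_nonneg (qD_nonneg w)]
  simp only [quarticDensity]
  have : |(-(w ^ 3) / 3)| ≤ |w| ^ 3 / 3 := by
    rw [abs_div, abs_neg, abs_pow]
    simp
  calc _ ≤ _ := mul_le_mul_of_nonneg_left this (qD_nonneg w)
    _ ≤ _ := by apply le_of_eq; simp [quarticDensity]; ring

lemma integrable_qD'' : Integrable qD'' := by
  have h6 := (integrable_quartic_pow 6).const_mul
    (Real.sqrt 2 / ((3 : ℝ) ^ ((1 : ℝ) / 4) * Real.Gamma (1 / 4)) / 9)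
  have h2 := (integrable_quartic_pow 2).const_mul
    (Real.sqrt 2 / ((3 : ℝ) ^ ((1 : ℝ) / 4) * Real.Gamma (1 / 4)))
  apply (h6.add h2).mono' continuous_qD''.aestronglyMeasurable
  filter_upwards with w
  simp only [Pi.add_apply]
  rw [Real.norm_eq_abs, qD'', abs_mul, abs_of_nonneg (qD_nonneg w)]
  have hb : |w ^ 6 / 9 - w ^ 2| ≤ |w| ^ 6 / 9 + |w| ^ 2 := by
    refine (abs_sub _ _).trans ?_
    rw [abs_div, abs_pow, abs_pow]
    norm_num
  calc quarticDensity w * |w ^ 6 / 9 - w ^ 2|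
      ≤ quarticDensity w * (|w| ^ 6 / 9 + |w| ^ 2) := mul_le_mul_of_nonneg_left hb (qD_nonneg w)
    _ ≤ _ := by apply le_of_eq; simp [quarticDensity]; ring

lemma taylor_identity (u a : ℝ) :
    quarticDensity (u - a) - quarticDensity u + a * qD' u
      = ∫ t in (0:ℝ)..1, (1 - t) * a ^ 2 * qD'' (u - t * a) := by
  have hφ : ∀ t ∈ Set.uIcc (0:ℝ) 1, HasDerivAt
      (fun t : ℝ => quarticDensity (u - t * a) + (1 - t) * (-a) * qD' (u - t * a))
      ((1 - t) * a ^ 2 * qD'' (u - t * a)) t := by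
    intro t _
    have hin : HasDerivAt (fun t : ℝ => u - t * a) (-a) t := by
      simpa using ((hasDerivAt_id t).mul_const a).const_sub u
    have h1 : HasDerivAt (fun t : ℝ => quarticDensity (u - t * a))
        (qD' (u - t * a) * (-a)) t := HasDerivAt.comp (h₂ := quarticDensity) t (hasDerivAt_qD (u - t * a)) hin
    have h2 : HasDerivAt (fun t : ℝ => (1 - t) * (-a)) a t := by
      simpa using ((hasDerivAt_id t).const_sub 1).mul_const (-a)
    have h3 : HasDerivAt (fun t : ℝ => qD' (u - t * a)) (qD'' (u - t * a) * (-a)) t :=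
      HasDerivAt.comp (h₂ := qD') t (hasDerivAt_qD' (u - t * a)) hin
    have := h1.add (h2.mul h3)
    refine this.congr_deriv ?_
    ring
  have hcont : Continuous (fun t : ℝ => (1 - t) * a ^ 2 * qD'' (u - t * a)) := by
    apply Continuous.mul
    · fun_prop
    · exact continuous_qD''.comp (by fun_prop)
  have := intervalIntegral.integral_eq_sub_of_hasDerivAt hφ (hcont.intervalIntegrable 0 1)
  rw [this]
  norm_num
  ring

lemma remainder_L1_bound (a : ℝ) :
    ∫ u, |quarticDensity (u - a) - quarticDensity u + a * qD' u|
      ≤ a ^ 2 * ∫ u, |qD'' u| := by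
  set K' : ℝ := ∫ u, |qD'' u| with hK'
  set F : ℝ → ℝ → ℝ := fun t u => |qD'' (u - t * a)| with hF
  set R : ℝ → ℝ := fun u => quarticDensity (u - a) - quarticDensity u + a * qD' u with hR
  set B : ℝ → ℝ := fun u => a ^ 2 * ∫ t in Set.Ioc (0:ℝ) 1, F t u with hB
  have hFcont : Continuous (Function.uncurry F) := by
    apply Continuous.abs
    exact continuous_qD''.comp (by fun_prop)
  have hFprod : Integrable (Function.uncurry F)
      ((volume.restrict (Set.Ioc (0:ℝ) 1)).prod volume) := by
    rw [integrable_prod_iff hFcont.aestronglyMeasurable]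
    constructor
    · filter_upwards with t
      exact (integrable_qD''.abs.comp_sub_right (t * a))
    · apply (integrable_const (μ := volume.restrict (Set.Ioc (0:ℝ) 1)) K').congr
      filter_upwards with t
      show K' = ∫ u, ‖Function.uncurry F (t, u)‖
      symm
      simp only [hF, Function.uncurry, Real.norm_eq_abs, abs_abs]
      exact integral_sub_right_eq_self (fun u => |qD'' u|) (t * a)
  have hBint : Integrable B := by
    exact (hFprod.integral_prod_right).const_mul (a ^ 2)
  have hRint : Integrable R := by
    exact ((integrable_qD.comp_sub_right a).sub integrable_qD).add (integrable_qD'.const_mul a)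
  have hRB : ∀ u, |R u| ≤ B u := by
    intro u
    show |quarticDensity (u - a) - quarticDensity u + a * qD' u| ≤ B u
    rw [taylor_identity u a]
    have h1 : |∫ t in (0:ℝ)..1, (1 - t) * a ^ 2 * qD'' (u - t * a)|
        ≤ ∫ t in (0:ℝ)..1, |(1 - t) * a ^ 2 * qD'' (u - t * a)| := by
      exact intervalIntegral.abs_integral_le_integral_abs zero_le_one
    refine h1.trans ?_
    have h2 : ∫ t in (0:ℝ)..1, |(1 - t) * a ^ 2 * qD'' (u - t * a)|
        ≤ ∫ t in (0:ℝ)..1, a ^ 2 * |qD'' (u - t * a)| := by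
      apply intervalIntegral.integral_mono_on zero_le_one
      · apply Continuous.intervalIntegrable
        apply Continuous.abs
        apply Continuous.mul (by fun_prop) (continuous_qD''.comp (by fun_prop))
      · apply Continuous.intervalIntegrable
        exact (continuous_const.mul (continuous_qD''.comp (by fun_prop)).abs)
      · intro t ht
        rw [abs_mul, abs_mul]
        apply mul_le_mul_of_nonneg_right _ (abs_nonneg _)
        rw [abs_of_nonneg (by nlinarith [ht.1, ht.2] : (0:ℝ) ≤ 1 - t), abs_of_nonneg (sq_nonneg a)]
        nlinarith [ht.1, ht.2, sq_nonneg a]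
    refine h2.trans ?_
    rw [intervalIntegral.integral_of_le zero_le_one, integral_const_mul]
  have step1 : ∫ u, |R u| ≤ ∫ u, B u := by
    apply integral_mono hRint.abs hBint hRB
  have swap := (integral_integral_swap (f := F) hFprod).symm
  have hBeq : ∫ u, B u = a ^ 2 * K' := by
    calc ∫ u, B u = a ^ 2 * ∫ u, ∫ t in Set.Ioc (0:ℝ) 1, F t u := by
          rw [hB, integral_const_mul]
      _ = a ^ 2 * ∫ t in Set.Ioc (0:ℝ) 1, ∫ u, F t u := by rw [swap]
      _ = a ^ 2 * ∫ t in Set.Ioc (0:ℝ) 1, K' := by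
          congr 1
          apply integral_congr_ae
          filter_upwards with t
          exact integral_sub_right_eq_self (fun u => |qD'' u|) (t * a)
      _ = a ^ 2 * K' := by
          rw [integral_const]
          simp [Real.volume_Ioc]
  exact step1.trans hBeq.le

lemma key_set {s : Set ℝ} (hs : MeasurableSet s) (a : ℝ) :
    |(∫ u in s, quarticDensity (u - a)) - (∫ u in s, quarticDensity u)
        + a * ∫ u in s, qD' u| ≤ a ^ 2 * ∫ u, |qD'' u| := by
  set R : ℝ → ℝ := fun u => quarticDensity (u - a) - quarticDensity u + a * qD' u with hR
  have hRint : Integrable R :=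
    ((integrable_qD.comp_sub_right a).sub integrable_qD).add (integrable_qD'.const_mul a)
  have hsplit : ∫ u in s, R u = (∫ u in s, quarticDensity (u - a)) - (∫ u in s, quarticDensity u)
      + a * ∫ u in s, qD' u := by
    rw [hR]
    have h1' : IntegrableOn (fun u => quarticDensity (u - a) - quarticDensity u) s volume :=
      ((integrable_qD.comp_sub_right a).sub integrable_qD).integrableOn
    have h2' : IntegrableOn (fun u => a * qD' u) s volume :=
      (integrable_qD'.const_mul a).integrableOn
    rw [integral_add h1' h2',
      integral_sub ((integrable_qD.comp_sub_right a).integrableOn) (integrable_qD.integrableOn),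
      integral_const_mul]
  rw [← hsplit]
  have h1 : |∫ u in s, R u| ≤ ∫ u in s, |R u| := by
    simpa [Real.norm_eq_abs] using norm_integral_le_integral_norm (μ := volume.restrict s) R
  have h2 : ∫ u in s, |R u| ≤ ∫ u, |R u| :=
    setIntegral_le_integral hRint.abs (Filter.Eventually.of_forall fun u => abs_nonneg _)
  exact h1.trans (h2.trans (remainder_L1_bound a))

lemma integral_withDensity_ofReal {f : ℝ → ℝ} (hf : Measurable f) (hf0 : ∀ x, 0 ≤ f x)
    (g : ℝ → ℝ) :
    ∫ x, g x ∂(volume.withDensity fun x => ENNReal.ofReal (f x)) = ∫ x, f x * g x := by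
  have heq : (volume.withDensity fun x => ENNReal.ofReal (f x))
      = volume.withDensity (fun x => ((Real.toNNReal (f x) : ℝ≥0) : ℝ≥0∞)) := rfl
  rw [heq, integral_withDensity_eq_integral_smul hf.real_toNNReal g]
  apply integral_congr_ae
  filter_upwards with x
  rw [NNReal.smul_def, Real.coe_toNNReal _ (hf0 x), smul_eq_mul]

lemma gaussian_eq : gaussianReal 0 1 = volume.withDensity (gaussianPDF 0 1) :=
  gaussianReal_of_var_ne_zero 0 one_ne_zero

lemma pdf_eval (x : ℝ) : gaussianPDFReal 0 1 x = (Real.sqrt (2 * π))⁻¹ * Real.exp (-(1/2) * x ^ 2) := by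
  unfold gaussianPDFReal
  norm_num
  left
  ring_nf

lemma integrable_pow_gaussian (k : ℕ) :
    Integrable (fun z : ℝ => z ^ k) (gaussianReal 0 1) := by
  rw [gaussian_eq, integrable_withDensity_iff (measurable_gaussianPDF 0 1)
    (Filter.Eventually.of_forall fun x => ENNReal.ofReal_lt_top)]
  have hbound := (integrable_gauss_pow k (b := 1/2) (by norm_num)).const_mul
    ((Real.sqrt (2 * π))⁻¹)
  apply hbound.mono'
  · apply AEMeasurable.aestronglyMeasurable
    exact ((measurable_id.pow_const k).mul
      (measurable_gaussianPDF 0 1).ennreal_toReal).aemeasurable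
  · filter_upwards with x
    have h1 : (gaussianPDF 0 1 x).toReal = gaussianPDFReal 0 1 x :=
      ENNReal.toReal_ofReal (gaussianPDFReal_nonneg 0 1 x)
    rw [Real.norm_eq_abs, h1, abs_mul, pdf_eval, abs_mul, abs_pow]
    rw [abs_of_nonneg (by positivity : (0:ℝ) ≤ (Real.sqrt (2 * π))⁻¹),
      abs_of_nonneg (Real.exp_pos _).le]
    apply le_of_eq
    ring

lemma integrable_id_gaussian : Integrable (fun z : ℝ => z) (gaussianReal 0 1) := by
  simpa using integrable_pow_gaussian 1

lemma integral_id_gaussian : ∫ z, z ∂(gaussianReal 0 1) = 0 := by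
  rw [gaussian_eq]
  have hg : ∫ z, z ∂(volume.withDensity (gaussianPDF 0 1))
      = ∫ x, gaussianPDFReal 0 1 x * x :=
    integral_withDensity_ofReal (measurable_gaussianPDFReal 0 1)
      (gaussianPDFReal_nonneg 0 1) (fun z => z)
  rw [hg]
  have hneg := integral_neg_eq_self (fun x => gaussianPDFReal 0 1 x * x) (volume : Measure ℝ)
  have hodd : (fun x => gaussianPDFReal 0 1 (-x) * (-x))
      = fun x => -(gaussianPDFReal 0 1 x * x) := by
    funext x
    rw [pdf_eval, pdf_eval, neg_sq]
    ring
  rw [hodd] at hneg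
  rw [integral_neg] at hneg
  linarith

lemma main_bound {s : Set ℝ} (hs : MeasurableSet s) (ε : ℝ) :
    |((Measure.map (fun p : ℝ × ℝ => p.1 + ε * p.2)
        (quarticMeasure.prod (gaussianReal 0 1))) s).toReal -
      (quarticMeasure s).toReal|
      ≤ ((∫ u, |qD'' u|) * ∫ z, z ^ 2 ∂(gaussianReal 0 1)) * ε ^ 2 := by
  set γ := gaussianReal 0 1 with hγdef
  set K'' : ℝ := ∫ u, |qD'' u| with hK''
  set M : ℝ := ∫ z, z ^ 2 ∂γ with hM
  haveI hfin : IsFiniteMeasure quarticMeasure := by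
    unfold quarticMeasure
    exact isFiniteMeasure_withDensity_ofReal integrable_qD.hasFiniteIntegral
  set P := quarticMeasure.prod γ with hP
  have hT : Measurable (fun p : ℝ × ℝ => p.1 + ε * p.2) := by fun_prop
  have hμint : ∀ g : ℝ → ℝ, ∫ x, g x ∂quarticMeasure = ∫ x, quarticDensity x * g x := by
    intro g
    unfold quarticMeasure
    exact integral_withDensity_ofReal continuous_qD.measurable qD_nonneg g
  have Hrep : ∀ a : ℝ, (∫ w, Set.indicator s (1 : ℝ → ℝ) (w + a) ∂quarticMeasure)
      = ∫ u in s, quarticDensity (u - a) := by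
    intro a
    rw [hμint]
    have htrans := integral_add_right_eq_self (μ := volume)
      (fun u => quarticDensity (u - a) * Set.indicator s (1 : ℝ → ℝ) u) a
    simp only [add_sub_cancel_right] at htrans
    rw [htrans]
    have hind : (fun u => quarticDensity (u - a) * Set.indicator s (1 : ℝ → ℝ) u)
        = s.indicator (fun u => quarticDensity (u - a)) := by
      funext u
      by_cases h : u ∈ s <;> simp [h]
    rw [hind, integral_indicator hs]
  have h1 : ((Measure.map (fun p : ℝ × ℝ => p.1 + ε * p.2) P) s).toReal
      = ∫ p, Set.indicator s (1 : ℝ → ℝ) (p.1 + ε * p.2) ∂P := by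
    rw [Measure.map_apply hT hs, ← measureReal_def, ← integral_indicator_one (hT hs)]
    apply integral_congr_ae
    filter_upwards with p
    by_cases h : p.1 + ε * p.2 ∈ s <;>
      simp [Set.indicator_apply, Set.mem_preimage, h]
  have hIndP : Integrable (fun p : ℝ × ℝ =>
      Set.indicator s (1 : ℝ → ℝ) (p.1 + ε * p.2)) P := by
    have h := (integrable_const (1 : ℝ) (μ := P)).indicator
      (hT hs)
    apply h.congr
    filter_upwards with p
    by_cases h : p.1 + ε * p.2 ∈ s <;>
      simp [Set.indicator_apply, Set.mem_preimage, h]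
  have h2 := integral_prod_symm _ hIndP
  set Hd : ℝ → ℝ := fun z => ∫ u in s, quarticDensity (u - ε * z) with hHd
  set H0 : ℝ := ∫ u in s, quarticDensity u with hH0
  set D : ℝ := ∫ u in s, qD' u with hD
  have h3 : ∀ z : ℝ, (∫ w, Set.indicator s (1 : ℝ → ℝ) (w + ε * z) ∂quarticMeasure) = Hd z :=
    fun z => Hrep (ε * z)
  have h4 : (quarticMeasure s).toReal = H0 := by
    rw [← measureReal_def, ← integral_indicator_one hs]
    have h := Hrep 0
    simp only [add_zero, sub_zero] at h
    rw [hH0, ← h]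
  have hHdint : Integrable Hd γ := by
    apply (hIndP.integral_prod_right).congr
    filter_upwards with z
    exact h3 z
  have key5 : ((Measure.map (fun p : ℝ × ℝ => p.1 + ε * p.2) P) s).toReal
      - (quarticMeasure s).toReal = ∫ z, (Hd z - H0) ∂γ := by
    rw [h1, h2, h4]
    have hinner : ∫ z, (∫ w, Set.indicator s (1 : ℝ → ℝ) (w + ε * z) ∂quarticMeasure) ∂γ
        = ∫ z, Hd z ∂γ := by
      apply integral_congr_ae
      filter_upwards with z
      exact h3 z
    rw [hinner, integral_sub hHdint (integrable_const H0), integral_const, measureReal_def, measure_univ,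
      ENNReal.toReal_one, one_smul]
  set G1 : ℝ → ℝ := fun z => Hd z - H0 + ε * D * z with hG1
  have hG1int : Integrable G1 γ :=
    (hHdint.sub (integrable_const H0)).add (integrable_id_gaussian.const_mul (ε * D))
  have hA : Integrable (fun z => Hd z - H0) γ := hHdint.sub (integrable_const H0)
  have hB : Integrable (fun z : ℝ => ε * D * z) γ := integrable_id_gaussian.const_mul (ε * D)
  have hG1eq : ∫ z, (Hd z - H0) ∂γ = ∫ z, G1 z ∂γ := by
    simp only [hG1]
    rw [integral_add hA hB, integral_const_mul, hγdef, integral_id_gaussian]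
    ring
  have hptw : ∀ z : ℝ, |G1 z| ≤ (K'' * ε ^ 2) * z ^ 2 := by
    intro z
    have hk := key_set hs (ε * z)
    have heq : G1 z = (∫ u in s, quarticDensity (u - ε * z)) - (∫ u in s, quarticDensity u)
        + (ε * z) * ∫ u in s, qD' u := by
      rw [hG1, hHd, hH0, hD]
      ring
    rw [heq]
    calc |(∫ u in s, quarticDensity (u - ε * z)) - (∫ u in s, quarticDensity u)
          + (ε * z) * ∫ u in s, qD' u| ≤ (ε * z) ^ 2 * K'' := hk
      _ = (K'' * ε ^ 2) * z ^ 2 := by ring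
  have habs : |∫ z, G1 z ∂γ| ≤ ∫ z, |G1 z| ∂γ := by
    simpa [Real.norm_eq_abs] using norm_integral_le_integral_norm (μ := γ) G1
  have hmono : ∫ z, |G1 z| ∂γ ≤ ∫ z, (K'' * ε ^ 2) * z ^ 2 ∂γ :=
    integral_mono hG1int.abs ((integrable_pow_gaussian 2).const_mul _) hptw
  have hfinal : ∫ z, (K'' * ε ^ 2) * z ^ 2 ∂γ = (K'' * M) * ε ^ 2 := by
    rw [integral_const_mul, ← hM]
    ring
  rw [key5, hG1eq]
  calc |∫ z, G1 z ∂γ| ≤ ∫ z, |G1 z| ∂γ := habs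
    _ ≤ ∫ z, (K'' * ε ^ 2) * z ^ 2 ∂γ := hmono
    _ = (K'' * M) * ε ^ 2 := hfinal

theorem stmt16' :
    ∃ C > 0, ∀ n : ℕ, 2 ≤ n → ∀ s : Set ℝ, MeasurableSet s →
      |((Measure.map (fun p : ℝ × ℝ => p.1 + (n : ℝ) ^ (-(1 : ℝ) / 4) * p.2)
            (quarticMeasure.prod (gaussianReal 0 1))) s).toReal -
          (quarticMeasure s).toReal| ≤ C * Real.sqrt (Real.log n / n) := by
  set K'' : ℝ := ∫ u, |qD'' u| with hK''
  set M : ℝ := ∫ z, z ^ 2 ∂(gaussianReal 0 1) with hM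
  have hKnn : 0 ≤ K'' := integral_nonneg fun u => abs_nonneg _
  have hMnn : 0 ≤ M := integral_nonneg fun z => sq_nonneg z
  have hlog2 : 0 < Real.log 2 := Real.log_pos (by norm_num)
  have hsl2 : 0 < Real.sqrt (Real.log 2) := Real.sqrt_pos.2 hlog2
  refine ⟨(K'' * M + 1) / Real.sqrt (Real.log 2), by positivity, fun n hn s hs => ?_⟩
  set C : ℝ := (K'' * M + 1) / Real.sqrt (Real.log 2) with hC
  have hn0 : (0 : ℝ) < n := by
    have : (2 : ℝ) ≤ n := by exact_mod_cast hn
    linarith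
  have hsn : 0 < Real.sqrt n := Real.sqrt_pos.2 hn0
  have hmb := main_bound hs ((n : ℝ) ^ (-(1 : ℝ) / 4))
  have heps : ((n : ℝ) ^ (-(1 : ℝ) / 4)) ^ 2 = (Real.sqrt n)⁻¹ := by
    rw [← Real.rpow_natCast ((n : ℝ) ^ (-(1 : ℝ) / 4)) 2, ← Real.rpow_mul hn0.le]
    have h12 : (-(1 : ℝ) / 4) * (2 : ℕ) = -(1/2 : ℝ) := by push_cast; ring
    rw [h12, Real.rpow_neg hn0.le, Real.sqrt_eq_rpow]
  rw [heps] at hmb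
  refine hmb.trans ?_
  have hn2 : (2 : ℝ) ≤ n := by exact_mod_cast hn
  have hlogn : Real.log 2 ≤ Real.log n := Real.log_le_log (by norm_num) hn2
  have hlognn : 0 ≤ Real.log n := le_trans hlog2.le hlogn
  have hCpos : 0 < C := by rw [hC]; positivity
  have hnum : K'' * M ≤ C * Real.sqrt (Real.log n) := by
    have h1 : C * Real.sqrt (Real.log 2) = K'' * M + 1 := by
      rw [hC]
      field_simp
    calc K'' * M ≤ K'' * M + 1 := by linarith
      _ = C * Real.sqrt (Real.log 2) := h1.symm
      _ ≤ C * Real.sqrt (Real.log n) :=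
        mul_le_mul_of_nonneg_left (Real.sqrt_le_sqrt hlogn) hCpos.le
  calc K'' * M * (Real.sqrt n)⁻¹ ≤ (C * Real.sqrt (Real.log n)) * (Real.sqrt n)⁻¹ := by
        apply mul_le_mul_of_nonneg_right hnum (by positivity)
    _ = C * Real.sqrt (Real.log n / n) := by
        rw [Real.sqrt_div hlognn]
        ring


/-- Total variation bound: adding independent Gaussian noise of size `n^{-1/4}` to `𝖶`
perturbs its law by at most `C √(log n / n)` in total variation (uniformly over Borel sets). -/
theorem stmt16 :
    ∃ C > 0, ∀ n : ℕ, 2 ≤ n → ∀ s : Set ℝ, MeasurableSet s →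
      |((Measure.map (fun p : ℝ × ℝ => p.1 + (n : ℝ) ^ (-(1 : ℝ) / 4) * p.2)
            (quarticMeasure.prod (gaussianReal 0 1))) s).toReal -
          (quarticMeasure s).toReal| ≤ C * Real.sqrt (Real.log n / n) := stmt16'
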